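/- arXiv:2504.00386 — 3 statements merged into one kernel-verified Lean document; each statement's English description precedes it below -/
import Mathlib

section
/- Let v be a real number with |v| < 1, let γ = 1/√(1 − v²), and let x₀ be a real number. Then the kink soliton φ(x,t) = 4·arctan(exp(γ(x − v t − x₀))) satisfies the sine-Gordon equation ∂²φ/∂t² − ∂²φ/∂x² + sin φ = 0 for all real x and t. -/
/-- Second partial derivative in time of a function of (x, t). -/
noncomputable def dtt (f : ℝ → ℝ → ℝ) (x t : ℝ) : ℝ :=
  deriv (fun s => deriv (fun s' => f x s') s) t

/-- Second partial derivative in space of a function of (x, t). -/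
noncomputable def dxx (f : ℝ → ℝ → ℝ) (x t : ℝ) : ℝ :=
  deriv (fun y => deriv (fun y' => f y' t) y) x

open Real in
private lemma hasDerivAt_F (u : ℝ) :
    HasDerivAt (fun u => 4 * Real.arctan (Real.exp u))
      (4 * Real.exp u / (1 + Real.exp u ^ 2)) u := by
  have h := ((Real.hasDerivAt_arctan (Real.exp u)).comp u (Real.hasDerivAt_exp u)).const_mul 4
  exact h.congr_deriv (by ring)

private lemma hasDerivAt_G (u : ℝ) :
    HasDerivAt (fun u => 4 * Real.exp u / (1 + Real.exp u ^ 2))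
      (4 * Real.exp u * (1 - Real.exp u ^ 2) / (1 + Real.exp u ^ 2) ^ 2) u := by
  have hne : 1 + Real.exp u ^ 2 ≠ 0 := by positivity
  have h1 : HasDerivAt (fun u => 4 * Real.exp u) (4 * Real.exp u) u :=
    (Real.hasDerivAt_exp u).const_mul 4
  have h2 : HasDerivAt (fun u => 1 + Real.exp u ^ 2)
      ((2 : ℕ) * Real.exp u ^ (2 - 1) * Real.exp u) u :=
    ((Real.hasDerivAt_exp u).pow 2).const_add 1
  have := h1.div h2 hne
  exact this.congr_deriv (by field_simp; push_cast; ring)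

private lemma sin_F (u : ℝ) :
    Real.sin (4 * Real.arctan (Real.exp u)) =
      4 * Real.exp u * (1 - Real.exp u ^ 2) / (1 + Real.exp u ^ 2) ^ 2 := by
  set y := Real.exp u with hy
  have hy2 : (0:ℝ) < 1 + y ^ 2 := by positivity
  have hsne : Real.sqrt (1 + y ^ 2) ≠ 0 := by positivity
  have hs : Real.sqrt (1 + y ^ 2) ^ 2 = 1 + y ^ 2 := Real.sq_sqrt hy2.le
  have h4 : (4:ℝ) * Real.arctan y = 2 * (2 * Real.arctan y) := by ring
  rw [h4, Real.sin_two_mul, Real.cos_two_mul, Real.sin_two_mul,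
    Real.sin_arctan, Real.cos_arctan]
  field_simp
  linear_combination (-4 * y * (1 + y ^ 2) ^ 2 - 4 * y * (1 - y ^ 2) * (Real.sqrt (1 + y ^ 2) ^ 2 + (1 + y ^ 2))) * hs

private lemma second_deriv_aux (c d t : ℝ) :
    deriv (fun s => deriv (fun s' => 4 * Real.arctan (Real.exp (c + d * s'))) s) t
      = d ^ 2 * (4 * Real.exp (c + d * t) * (1 - Real.exp (c + d * t) ^ 2)
          / (1 + Real.exp (c + d * t) ^ 2) ^ 2) := by
  have hl : ∀ s : ℝ, HasDerivAt (fun s' : ℝ => c + d * s') d s := by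
    intro s
    simpa using ((hasDerivAt_id s).const_mul d).const_add c
  have hinner : (fun s => deriv (fun s' => 4 * Real.arctan (Real.exp (c + d * s'))) s)
      = fun s => d * (4 * Real.exp (c + d * s) / (1 + Real.exp (c + d * s) ^ 2)) := by
    funext s
    have h := (hasDerivAt_F (c + d * s)).comp s (hl s)
    rw [show (fun s' => 4 * Real.arctan (Real.exp (c + d * s')))
        = ((fun u => 4 * Real.arctan (Real.exp u)) ∘ fun s' : ℝ => c + d * s') from rfl,
      h.deriv]; ring
  rw [hinner]
  have h := (((hasDerivAt_G (c + d * t)).comp t (hl t)).const_mul d).deriv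
  rw [show (fun s => d * (4 * Real.exp (c + d * s) / (1 + Real.exp (c + d * s) ^ 2)))
      = (fun y => d * ((fun u => 4 * Real.exp u / (1 + Real.exp u ^ 2)) ∘ fun s' : ℝ => c + d * s') y) from rfl,
    h]; ring

/-- The kink soliton `φ(x,t) = 4 arctan (exp (γ (x − v t − x₀)))` with `|v| < 1`,
`γ = 1/√(1 − v²)`, satisfies the sine-Gordon equation
`φ_tt − φ_xx + sin φ = 0` for all real `x` and `t`. -/
theorem kink_satisfies_sineGordon (v γ x₀ : ℝ) (hv : |v| < 1)
    (hγ : γ = 1 / Real.sqrt (1 - v ^ 2))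
    (φ : ℝ → ℝ → ℝ)
    (hφ : ∀ x t, φ x t = 4 * Real.arctan (Real.exp (γ * (x - v * t - x₀)))) :
    ∀ x t : ℝ, dtt φ x t - dxx φ x t + Real.sin (φ x t) = 0 := by

  intro x t
  have h1v : (0:ℝ) < 1 - v ^ 2 := by
    have := abs_lt.mp hv
    nlinarith
  have hγ2 : γ ^ 2 * (1 - v ^ 2) = 1 := by
    rw [hγ, div_pow, one_pow, Real.sq_sqrt h1v.le]
    field_simp
  set u := γ * (x - v * t - x₀) with hu
  have htfun : (fun s' => φ x s') = fun s' => 4 * Real.arctan (Real.exp (γ * (x - x₀) + (-(γ * v)) * s')) := by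
    funext s'
    rw [hφ, show γ * (x - v * s' - x₀) = γ * (x - x₀) + (-(γ * v)) * s' from by ring]
  have hxfun : ∀ y' : ℝ, φ y' t = 4 * Real.arctan (Real.exp (γ * (-(v * t) - x₀) + γ * y')) := by
    intro y'
    rw [hφ, show γ * (y' - v * t - x₀) = γ * (-(v * t) - x₀) + γ * y' from by ring]
  have hdtt : dtt φ x t = (-(γ * v)) ^ 2 * (4 * Real.exp u * (1 - Real.exp u ^ 2)
      / (1 + Real.exp u ^ 2) ^ 2) := by
    rw [dtt]
    simp only [htfun]
    rw [second_deriv_aux]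
    congr 2 <;> rw [show γ * (x - x₀) + (-(γ * v)) * t = u from by rw [hu]; ring]
  have hdxx : dxx φ x t = γ ^ 2 * (4 * Real.exp u * (1 - Real.exp u ^ 2)
      / (1 + Real.exp u ^ 2) ^ 2) := by
    rw [dxx]
    simp only [hxfun]
    rw [second_deriv_aux]
    congr 2 <;> rw [show γ * (-(v * t) - x₀) + γ * x = u from by rw [hu]; ring]
  rw [hdtt, hdxx, hφ, ← hu, sin_F]
  set W := 4 * Real.exp u * (1 - Real.exp u ^ 2) / (1 + Real.exp u ^ 2) ^ 2
  linear_combination (-W) * hγ2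
end

section
/- Let L > 0, T > 0, ε ∈ (0,1], let φ : [−L,L] × [0,T] → ℝ be continuous, and let g : [−L,L] × [0,T] → ℝ be continuous. Let η be a twice continuously differentiable solution on [−L,L] × [0,T] of η_tt − η_xx + ε⁻¹(sin(φ + ε η) − sin φ) = g with boundary conditions η_x(−L,t) = η_x(L,t) = 0 (or η(−L,t) = η(L,t) = 0) and initial data η(x,0) = u₀(x), η_t(x,0) = v₀(x). Then there exists a constant c depending only on T such that for all t ∈ [0,T]: ∫_{−L}^{L} η_t(x,t)² dx + ∫_{−L}^{L} (η(x,t)² + η_x(x,t)²) dx ≤ c ( ∫_{−L}^{L} v₀(x)² dx + ∫_{−L}^{L} (u₀(x)² + u₀'(x)²) dx + ∫_0^t ∫_{−L}^{L} g(x,s)² dx ds ). -/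
open Set MeasureTheory intervalIntegral

/-- Partial derivative in time of a function of (x, t). -/
noncomputable def pdt (f : ℝ → ℝ → ℝ) (x t : ℝ) : ℝ := deriv (fun s => f x s) t

/-- Partial derivative in space of a function of (x, t). -/
noncomputable def pdx (f : ℝ → ℝ → ℝ) (x t : ℝ) : ℝ := deriv (fun y => f y t) x

namespace EnergyAux

/-- first-order directional derivative -/
noncomputable def D1 (η : ℝ → ℝ → ℝ) (v : ℝ × ℝ) (x t : ℝ) : ℝ :=
  fderiv ℝ (Function.uncurry η) (x, t) v

/-- second-order directional derivative: first in direction `v`, then in direction `w` -/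
noncomputable def D2 (η : ℝ → ℝ → ℝ) (v w : ℝ × ℝ) (x t : ℝ) : ℝ :=
  fderiv ℝ (fderiv ℝ (Function.uncurry η)) (x, t) w v

variable {η : ℝ → ℝ → ℝ}

lemma hasDerivAt_line_t (hη : ContDiff ℝ 2 (Function.uncurry η)) (x t : ℝ) :
    HasDerivAt (fun s => η x s) (D1 η (0, 1) x t) t := by
  have h1 : HasFDerivAt (Function.uncurry η) (fderiv ℝ (Function.uncurry η) (x, t)) (x, t) :=
    (hη.differentiable (by norm_num) (x, t)).hasFDerivAt
  have h2 : HasDerivAt (fun s : ℝ => ((x, s) : ℝ × ℝ)) (0, 1) t :=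
    HasDerivAt.prodMk (hasDerivAt_const t x) (hasDerivAt_id t)
  exact h1.comp_hasDerivAt t h2

lemma hasDerivAt_line_x (hη : ContDiff ℝ 2 (Function.uncurry η)) (x t : ℝ) :
    HasDerivAt (fun y => η y t) (D1 η (1, 0) x t) x := by
  have h1 : HasFDerivAt (Function.uncurry η) (fderiv ℝ (Function.uncurry η) (x, t)) (x, t) :=
    (hη.differentiable (by norm_num) (x, t)).hasFDerivAt
  have h2 : HasDerivAt (fun y : ℝ => ((y, t) : ℝ × ℝ)) (1, 0) x :=
    HasDerivAt.prodMk (hasDerivAt_id x) (hasDerivAt_const x t)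
  exact h1.comp_hasDerivAt x h2

lemma pdt_eq (hη : ContDiff ℝ 2 (Function.uncurry η)) (x t : ℝ) :
    pdt η x t = D1 η (0, 1) x t := (hasDerivAt_line_t hη x t).deriv

lemma pdx_eq (hη : ContDiff ℝ 2 (Function.uncurry η)) (x t : ℝ) :
    pdx η x t = D1 η (1, 0) x t := (hasDerivAt_line_x hη x t).deriv

lemma hasFDerivAt_D1 (hη : ContDiff ℝ 2 (Function.uncurry η)) (v : ℝ × ℝ) (p : ℝ × ℝ) :
    HasFDerivAt (fun q : ℝ × ℝ => D1 η v q.1 q.2)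
      ((ContinuousLinearMap.apply ℝ ℝ v).comp
        (fderiv ℝ (fderiv ℝ (Function.uncurry η)) p)) p := by
  have hF' : Differentiable ℝ (fderiv ℝ (Function.uncurry η)) :=
    (hη.fderiv_right (m := 1) (by norm_num)).differentiable (by norm_num)
  exact (ContinuousLinearMap.apply ℝ ℝ v).hasFDerivAt.comp p (hF' p).hasFDerivAt

lemma hasDerivAt_D1_t (hη : ContDiff ℝ 2 (Function.uncurry η)) (v : ℝ × ℝ) (x t : ℝ) :
    HasDerivAt (fun s => D1 η v x s) (D2 η v (0, 1) x t) t := by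
  have h2 : HasDerivAt (fun s : ℝ => ((x, s) : ℝ × ℝ)) (0, 1) t :=
    HasDerivAt.prodMk (hasDerivAt_const t x) (hasDerivAt_id t)
  exact (hasFDerivAt_D1 hη v (x, t)).comp_hasDerivAt t h2

lemma hasDerivAt_D1_x (hη : ContDiff ℝ 2 (Function.uncurry η)) (v : ℝ × ℝ) (x t : ℝ) :
    HasDerivAt (fun y => D1 η v y t) (D2 η v (1, 0) x t) x := by
  have h2 : HasDerivAt (fun y : ℝ => ((y, t) : ℝ × ℝ)) (1, 0) x :=
    HasDerivAt.prodMk (hasDerivAt_id x) (hasDerivAt_const x t)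
  exact (hasFDerivAt_D1 hη v (x, t)).comp_hasDerivAt x h2

lemma continuous_D1 (hη : ContDiff ℝ 2 (Function.uncurry η)) (v : ℝ × ℝ) :
    Continuous (fun p : ℝ × ℝ => D1 η v p.1 p.2) := by
  have h1 : Continuous (fderiv ℝ (Function.uncurry η)) :=
    ((hη.fderiv_right (m := 1) (by norm_num)).continuous)
  exact h1.clm_apply continuous_const

lemma continuous_D2 (hη : ContDiff ℝ 2 (Function.uncurry η)) (v w : ℝ × ℝ) :
    Continuous (fun p : ℝ × ℝ => D2 η v w p.1 p.2) := by
  have h1 : Continuous (fderiv ℝ (fderiv ℝ (Function.uncurry η))) :=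
    (hη.fderiv_right (m := 1) (by norm_num)).continuous_fderiv (by norm_num)
  exact (h1.clm_apply continuous_const).clm_apply continuous_const

lemma D2_symm (hη : ContDiff ℝ 2 (Function.uncurry η)) (v w : ℝ × ℝ) (x t : ℝ) :
    D2 η v w x t = D2 η w v x t := by
  have := (hη.contDiffAt (x := (x, t))).isSymmSndFDerivAt (by simp)
  exact (this w v)

lemma pdtt_eq (hη : ContDiff ℝ 2 (Function.uncurry η)) (x t : ℝ) :
    pdt (pdt η) x t = D2 η (0, 1) (0, 1) x t := by
  have h : (fun s => pdt η x s) = fun s => D1 η (0, 1) x s :=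
    funext fun s => pdt_eq hη x s
  rw [show pdt (pdt η) x t = deriv (fun s => pdt η x s) t from rfl, h]
  exact (hasDerivAt_D1_t hη (0, 1) x t).deriv

lemma pdxx_eq (hη : ContDiff ℝ 2 (Function.uncurry η)) (x t : ℝ) :
    pdx (pdx η) x t = D2 η (1, 0) (1, 0) x t := by
  have h : (fun y => pdx η y t) = fun y => D1 η (1, 0) y t :=
    funext fun y => pdx_eq hη y t
  rw [show pdx (pdx η) x t = deriv (fun y => pdx η y t) x from rfl, h]
  exact (hasDerivAt_D1_x hη (1, 0) x t).deriv

end EnergyAux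

namespace EnergyAux

lemma swap_integral {a b c d : ℝ} (hab : a ≤ b) (hcd : c ≤ d) {F : ℝ → ℝ → ℝ}
    (hF : Continuous fun p : ℝ × ℝ => F p.1 p.2) :
    ∫ s in c..d, ∫ x in a..b, F x s = ∫ x in a..b, ∫ s in c..d, F x s := by
  simp_rw [intervalIntegral.integral_of_le hab, intervalIntegral.integral_of_le hcd]
  refine MeasureTheory.integral_integral_swap ?_
  rw [MeasureTheory.Measure.prod_restrict]
  have hcomp : IsCompact (Icc c d ×ˢ Icc a b) := isCompact_Icc.prod isCompact_Icc
  have h1 : MeasureTheory.IntegrableOn (fun p : ℝ × ℝ => F p.2 p.1) (Icc c d ×ˢ Icc a b)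
      (MeasureTheory.volume.prod MeasureTheory.volume) := by
    rw [← MeasureTheory.Measure.volume_eq_prod]
    exact (hF.comp continuous_swap).continuousOn.integrableOn_compact hcomp
  exact h1.mono_set (Set.prod_mono Ioc_subset_Icc_self Ioc_subset_Icc_self)

end EnergyAux

open EnergyAux in
/-- Energy estimate for the perturbation equation around a soliton profile: for `T > 0`
there is a constant `c > 0` depending only on `T` such that any `C²` solution `η` of
`η_tt − η_xx + ε⁻¹(sin(φ + ε η) − sin φ) = g` on `(−L,L) × (0,T)` with Neumann (or
Dirichlet) boundary conditions and initial data `u₀, v₀` satisfies, for all `t ∈ [0,T]`,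
`∫ η_t² + ∫ (η² + η_x²) ≤ c (∫ v₀² + ∫ (u₀² + u₀'²) + ∫₀ᵗ ∫ g²)`. -/
theorem energy_estimate (T : ℝ) (hT : 0 < T) :
    ∃ c > 0, ∀ (L ε : ℝ) (φ g η : ℝ → ℝ → ℝ) (u₀ v₀ : ℝ → ℝ),
      0 < L → 0 < ε → ε ≤ 1 →
      Continuous (Function.uncurry φ) → Continuous (Function.uncurry g) →
      ContDiff ℝ 2 (Function.uncurry η) →
      (∀ x ∈ Ioo (-L) L, ∀ t ∈ Ioo (0 : ℝ) T,
        pdt (pdt η) x t - pdx (pdx η) x t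
          + ε⁻¹ * (Real.sin (φ x t + ε * η x t) - Real.sin (φ x t)) = g x t) →
      ((∀ t ∈ Icc (0 : ℝ) T, pdx η (-L) t = 0 ∧ pdx η L t = 0) ∨
       (∀ t ∈ Icc (0 : ℝ) T, η (-L) t = 0 ∧ η L t = 0)) →
      (∀ x ∈ Icc (-L) L, η x 0 = u₀ x ∧ pdt η x 0 = v₀ x) →
      ∀ t ∈ Icc (0 : ℝ) T,
        (∫ x in (-L)..L, (pdt η x t) ^ 2)
            + (∫ x in (-L)..L, ((η x t) ^ 2 + (pdx η x t) ^ 2)) ≤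
          c * ((∫ x in (-L)..L, (v₀ x) ^ 2)
              + (∫ x in (-L)..L, ((u₀ x) ^ 2 + (deriv u₀ x) ^ 2))
              + ∫ s in (0 : ℝ)..t, ∫ x in (-L)..L, (g x s) ^ 2) := by
  refine ⟨Real.exp (3 * T), Real.exp_pos _, ?_⟩
  intro L ε φ g η u₀ v₀ hL hε hε1 hφc hgc hη heq hbc hini t ht
  have hLL : -L ≤ L := by linarith
  set et := D1 η (0, 1) with het_def
  set ex := D1 η (1, 0) with hex_def
  set ett := D2 η (0, 1) (0, 1) with hett_def
  set ext := D2 η (1, 0) (0, 1) with hext_def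
  set etx := D2 η (0, 1) (1, 0) with hetx_def
  set exx := D2 η (1, 0) (1, 0) with hexx_def
  set Nf : ℝ → ℝ → ℝ := fun x τ => ε⁻¹ * (Real.sin (φ x τ + ε * η x τ) - Real.sin (φ x τ))
    with hNf_def
  set e : ℝ → ℝ → ℝ := fun x τ => (et x τ) ^ 2 + (η x τ) ^ 2 + (ex x τ) ^ 2 with he_def
  set Dq : ℝ → ℝ → ℝ := fun x τ =>
    2 * et x τ * ett x τ + 2 * η x τ * et x τ + 2 * ex x τ * ext x τ with hDq_def
  set En : ℝ → ℝ := fun τ => ∫ x in (-L)..L, e x τ with hEn_def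
  set Q : ℝ → ℝ := fun τ => ∫ x in (-L)..L, Dq x τ with hQ_def
  set Gg : ℝ → ℝ := fun τ => ∫ x in (-L)..L, (g x τ) ^ 2 with hGg_def
  -- continuity facts
  have hcη : Continuous fun p : ℝ × ℝ => η p.1 p.2 := hη.continuous
  have hcet : Continuous fun p : ℝ × ℝ => et p.1 p.2 := continuous_D1 hη _
  have hcex : Continuous fun p : ℝ × ℝ => ex p.1 p.2 := continuous_D1 hη _
  have hcett : Continuous fun p : ℝ × ℝ => ett p.1 p.2 := continuous_D2 hη _ _
  have hcext : Continuous fun p : ℝ × ℝ => ext p.1 p.2 := continuous_D2 hη _ _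
  have hcetx : Continuous fun p : ℝ × ℝ => etx p.1 p.2 := continuous_D2 hη _ _
  have hcexx : Continuous fun p : ℝ × ℝ => exx p.1 p.2 := continuous_D2 hη _ _
  have hcg : Continuous fun p : ℝ × ℝ => g p.1 p.2 := hgc
  have hcφ : Continuous fun p : ℝ × ℝ => φ p.1 p.2 := hφc
  have hce : Continuous fun p : ℝ × ℝ => e p.1 p.2 := by
    simp only [he_def]; exact ((hcet.pow 2).add (hcη.pow 2)).add (hcex.pow 2)
  have hcDq : Continuous fun p : ℝ × ℝ => Dq p.1 p.2 := by
    simp only [hDq_def]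
    exact (((continuous_const.mul hcet).mul hcett).add
      ((continuous_const.mul hcη).mul hcet)).add ((continuous_const.mul hcex).mul hcext)
  have hcNf : Continuous fun p : ℝ × ℝ => Nf p.1 p.2 := by
    simp only [hNf_def]
    exact continuous_const.mul ((Real.continuous_sin.comp
      (hcφ.add (continuous_const.mul hcη))).sub (Real.continuous_sin.comp hcφ))
  have hQc : Continuous Q := by
    simp only [hQ_def]
    exact intervalIntegral.continuous_parametric_intervalIntegral_of_continuous'
      (f := fun τ x => Dq x τ) (hcDq.comp continuous_swap) (-L) L
  have hGc : Continuous Gg := by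
    simp only [hGg_def]
    exact intervalIntegral.continuous_parametric_intervalIntegral_of_continuous'
      (f := fun τ x => (g x τ) ^ 2) (show Continuous fun p : ℝ × ℝ => (g p.2 p.1) ^ 2 from (hcg.comp continuous_swap).pow 2) (-L) L
  have hEnc : Continuous En := by
    simp only [hEn_def]
    exact intervalIntegral.continuous_parametric_intervalIntegral_of_continuous'
      (f := fun τ x => e x τ) (hce.comp continuous_swap) (-L) L
  have hXsl : ∀ {F : ℝ → ℝ → ℝ}, (Continuous fun p : ℝ × ℝ => F p.1 p.2) →
      ∀ τ' : ℝ, Continuous fun x : ℝ => F x τ' := fun hF τ' =>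
    hF.comp (continuous_id.prodMk continuous_const)
  have hTsl : ∀ {F : ℝ → ℝ → ℝ}, (Continuous fun p : ℝ × ℝ => F p.1 p.2) →
      ∀ x : ℝ, Continuous fun τ' : ℝ => F x τ' := fun hF x =>
    hF.comp (continuous_const.prodMk continuous_id)
  -- derivative of the energy density in time
  have hde : ∀ x τ, HasDerivAt (fun s => e x s) (Dq x τ) τ := by
    intro x τ
    have h1 := hasDerivAt_D1_t hη (0, 1) x τ
    have h2 := hasDerivAt_line_t hη x τ
    have h3 := hasDerivAt_D1_t hη (1, 0) x τ
    have h : HasDerivAt (fun s => e x s) _ τ := ((h1.pow 2).add (h2.pow 2)).add (h3.pow 2)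
    convert h using 1
    simp only [hDq_def]
    push_cast
    ring
  have hslice : ∀ x τ, ∫ s in (0:ℝ)..τ, Dq x s = e x τ - e x 0 := by
    intro x τ
    refine intervalIntegral.integral_eq_sub_of_hasDerivAt (fun s _ => hde x s) ?_
    exact (hTsl hcDq x).intervalIntegrable 0 τ
  -- the fundamental identity E(t) = E(0) + ∫₀ᵗ Q
  have hkey : ∀ τ : ℝ, 0 ≤ τ → En τ = En 0 + ∫ s in (0:ℝ)..τ, Q s := by
    intro τ hτ
    have hswap := swap_integral hLL hτ (F := Dq) hcDq
    have h1 : ∫ x in (-L)..L, ∫ s in (0:ℝ)..τ, Dq x s = En τ - En 0 := by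
      have : ∀ x ∈ uIcc (-L) L, ∫ s in (0:ℝ)..τ, Dq x s = e x τ - e x 0 := fun x _ => hslice x τ
      rw [intervalIntegral.integral_congr this]
      rw [intervalIntegral.integral_sub ((hXsl hce τ).intervalIntegrable _ _)
        ((hXsl hce 0).intervalIntegrable _ _)]
    simp only [hQ_def]
    rw [hswap, h1]
    ring
  -- derivative of E
  have hEd : ∀ τ ∈ Ioo (0:ℝ) T, HasDerivAt En (Q τ) τ := by
    intro τ hτ
    have h1 : HasDerivAt (fun u => En 0 + ∫ s in (0:ℝ)..u, Q s) (Q τ) τ := by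
      refine HasDerivAt.const_add _ ?_
      exact intervalIntegral.integral_hasDerivAt_right (hQc.intervalIntegrable _ _)
        (hQc.stronglyMeasurableAtFilter _ _) hQc.continuousAt
    refine h1.congr_of_eventuallyEq ?_
    filter_upwards [Ioi_mem_nhds hτ.1] with u hu
    exact hkey u (le_of_lt hu)
  -- pointwise bound on Q
  have hQle : ∀ s ∈ Ioo (0:ℝ) T, Q s ≤ 3 * En s + Gg s := by
    intro s hs
    have hsIcc : s ∈ Icc (0:ℝ) T := Ioo_subset_Icc_self hs
    -- boundary term vanishes
    have hbdry : 2 * et L s * ex L s - 2 * et (-L) s * ex (-L) s = 0 := by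
      rcases hbc with hN | hD
      · have h1 : ex (-L) s = 0 := by rw [hex_def, ← pdx_eq hη]; exact (hN s hsIcc).1
        have h2 : ex L s = 0 := by rw [hex_def, ← pdx_eq hη]; exact (hN s hsIcc).2
        rw [h1, h2]; ring
      · have key : ∀ y : ℝ, (∀ τ ∈ Icc (0:ℝ) T, η y τ = 0) → et y s = 0 := by
          intro y hy
          have hev : (fun τ => η y τ) =ᶠ[nhds s] fun _ => (0:ℝ) := by
            filter_upwards [Ioo_mem_nhds hs.1 hs.2] with τ hτ
            exact hy τ (Ioo_subset_Icc_self hτ)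
          calc et y s = deriv (fun τ => η y τ) s := (hasDerivAt_line_t hη y s).deriv.symm
            _ = deriv (fun _ : ℝ => (0:ℝ)) s := hev.deriv_eq
            _ = 0 := deriv_const s 0
        have h1 : et (-L) s = 0 := key (-L) fun τ hτ => (hD τ hτ).1
        have h2 : et L s = 0 := key L fun τ hτ => (hD τ hτ).2
        rw [h1, h2]; ring
    -- integration by parts
    have hibp : ∫ x in (-L)..L, (2 * etx x s * ex x s + 2 * et x s * exx x s) = 0 := by
      have hder : ∀ x ∈ uIcc (-L) L, HasDerivAt (fun y => 2 * et y s * ex y s)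
          (2 * etx x s * ex x s + 2 * et x s * exx x s) x := by
        intro x _
        have h1 := hasDerivAt_D1_x hη (0, 1) x s
        have h2 := hasDerivAt_D1_x hη (1, 0) x s
        have h : HasDerivAt (fun y => 2 * et y s * ex y s) _ x := (h1.const_mul 2).mul h2
        convert h using 1
      have hint : IntervalIntegrable (fun x => 2 * etx x s * ex x s + 2 * et x s * exx x s)
          MeasureTheory.volume (-L) L := by
        refine Continuous.intervalIntegrable ?_ _ _
        exact ((continuous_const.mul (hXsl hcetx s)).mul (hXsl hcex s)).add
          ((continuous_const.mul (hXsl hcet s)).mul (hXsl hcexx s))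
      rw [intervalIntegral.integral_eq_sub_of_hasDerivAt hder hint]
      exact hbdry
    -- the equation on the interior
    have heq2 : ∀ x ∈ Ioo (-L) L, Dq x s =
        (2 * etx x s * ex x s + 2 * et x s * exx x s)
        + (2 * η x s * et x s + 2 * et x s * (g x s - Nf x s)) := by
      intro x hx
      have he' := heq x hx s hs
      rw [pdtt_eq hη, pdxx_eq hη] at he'
      have hsymm : ext x s = etx x s := D2_symm hη (1, 0) (0, 1) x s
      have he'' : ett x s - exx x s + Nf x s = g x s := by
        simp only [hett_def, hexx_def, hNf_def]
        exact he'
      have hett' : ett x s = exx x s - Nf x s + g x s := by linarith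
      simp only [hDq_def]
      rw [hett', hsymm]
      ring
    -- rewrite Q s using the equation and integration by parts
    have hcrest : Continuous fun x => 2 * η x s * et x s + 2 * et x s * (g x s - Nf x s) := by
      exact ((continuous_const.mul (hXsl hcη s)).mul (hXsl hcet s)).add
        ((continuous_const.mul (hXsl hcet s)).mul ((hXsl hcg s).sub (hXsl hcNf s)))
    have hQeq : Q s = ∫ x in (-L)..L, (2 * η x s * et x s + 2 * et x s * (g x s - Nf x s)) := by
      have hae : ∀ᵐ x : ℝ ∂MeasureTheory.volume, x ≠ L := by
        filter_upwards [MeasureTheory.compl_mem_ae_iff.mpr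
          (MeasureTheory.measure_singleton L)] with x hx
        simpa using hx
      have h1 : Q s = ∫ x in (-L)..L,
          ((2 * etx x s * ex x s + 2 * et x s * exx x s)
            + (2 * η x s * et x s + 2 * et x s * (g x s - Nf x s))) := by
        simp only [hQ_def]
        refine intervalIntegral.integral_congr_ae ?_
        filter_upwards [hae] with x hx hxI
        rw [uIoc_of_le hLL] at hxI
        exact heq2 x ⟨hxI.1, lt_of_le_of_ne hxI.2 hx⟩
      rw [h1, intervalIntegral.integral_add ?_ (hcrest.intervalIntegrable _ _), hibp, zero_add]
      refine Continuous.intervalIntegrable ?_ _ _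
      exact ((continuous_const.mul (hXsl hcetx s)).mul (hXsl hcex s)).add
        ((continuous_const.mul (hXsl hcet s)).mul (hXsl hcexx s))
    -- pointwise bound of the remaining integrand
    have hNle : ∀ x : ℝ, (Nf x s) ^ 2 ≤ (η x s) ^ 2 := by
      intro x
      have hsin : ∀ a b : ℝ, |Real.sin a - Real.sin b| ≤ |a - b| := by
        intro a b
        rw [Real.sin_sub_sin, abs_mul, abs_mul]
        calc |(2:ℝ)| * |Real.sin ((a - b) / 2)| * |Real.cos ((a + b) / 2)|
            ≤ |(2:ℝ)| * |(a - b) / 2| * 1 := by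
              refine mul_le_mul (mul_le_mul_of_nonneg_left Real.abs_sin_le_abs (abs_nonneg _))
                (Real.abs_cos_le_one _) (abs_nonneg _) (by positivity)
          _ = |a - b| := by rw [abs_div]; norm_num; ring
      have habs : |Nf x s| ≤ |η x s| := by
        have hlip := hsin (φ x s + ε * η x s) (φ x s)
        rw [add_sub_cancel_left] at hlip
        have : |Nf x s| = ε⁻¹ * |Real.sin (φ x s + ε * η x s) - Real.sin (φ x s)| := by
          simp only [hNf_def, abs_mul, abs_of_pos (inv_pos.mpr hε)]
        rw [this]
        calc ε⁻¹ * |Real.sin (φ x s + ε * η x s) - Real.sin (φ x s)|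
            ≤ ε⁻¹ * |ε * η x s| := by
              apply mul_le_mul_of_nonneg_left hlip (le_of_lt (inv_pos.mpr hε))
          _ = ε⁻¹ * ε * |η x s| := by rw [abs_mul, abs_of_pos hε, mul_assoc]
          _ = |η x s| := by field_simp
      calc (Nf x s) ^ 2 = |Nf x s| ^ 2 := (sq_abs _).symm
        _ ≤ |η x s| ^ 2 := by exact pow_le_pow_left₀ (abs_nonneg _) habs 2
        _ = (η x s) ^ 2 := sq_abs _
    have hmono : Q s ≤ ∫ x in (-L)..L, (3 * e x s + (g x s) ^ 2) := by
      rw [hQeq]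
      refine intervalIntegral.integral_mono_on hLL (hcrest.intervalIntegrable _ _) ?_ ?_
      · exact ((continuous_const.mul (hXsl hce s)).add ((hXsl hcg s).pow 2)).intervalIntegrable _ _
      · intro x _
        have h2 := hNle x
        simp only [he_def]
        nlinarith [sq_nonneg (et x s - η x s), sq_nonneg (et x s - g x s),
          sq_nonneg (et x s + Nf x s), sq_nonneg (ex x s)]
    calc Q s ≤ ∫ x in (-L)..L, (3 * e x s + (g x s) ^ 2) := hmono
      _ = 3 * En s + Gg s := by
        rw [intervalIntegral.integral_add (f := fun x => 3 * e x s) (g := fun x => g x s ^ 2) ((continuous_const.mul (hXsl hce s)).intervalIntegrable _ _)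
          (((hXsl hcg s).pow 2).intervalIntegrable _ _), intervalIntegral.integral_const_mul]
  -- Gronwall
  have hGnn : ∀ τ : ℝ, 0 ≤ Gg τ := by
    intro τ
    simp only [hGg_def]
    exact intervalIntegral.integral_nonneg hLL fun x _ => sq_nonneg _
  have hEnn : ∀ τ : ℝ, 0 ≤ En τ := by
    intro τ
    simp only [hEn_def, he_def]
    exact intervalIntegral.integral_nonneg hLL fun x _ => by positivity
  have hEle : En t ≤ Real.exp (3 * T) * (En 0 + ∫ s in (0:ℝ)..t, Gg s) := by
    set F : ℝ → ℝ := fun τ =>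
      Real.exp (-3 * τ) * En τ - ∫ s in (0:ℝ)..τ, Real.exp (-3 * s) * Gg s with hF_def
    have hcint : Continuous fun s : ℝ => Real.exp (-3 * s) * Gg s :=
      (Real.continuous_exp.comp (continuous_const.mul continuous_id)).mul hGc
    have hexp : ∀ τ : ℝ, HasDerivAt (fun τ' => Real.exp (-3 * τ'))
        (-3 * Real.exp (-3 * τ)) τ := by
      intro τ
      have h := ((hasDerivAt_id τ).const_mul (-3 : ℝ)).exp
      simp only [id] at h
      convert h using 1
      ring
    have hprim : ∀ τ : ℝ, HasDerivAt (fun u => ∫ s in (0:ℝ)..u, Real.exp (-3 * s) * Gg s)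
        (Real.exp (-3 * τ) * Gg τ) τ := fun τ =>
      intervalIntegral.integral_hasDerivAt_right (hcint.intervalIntegrable _ _)
        (hcint.stronglyMeasurableAtFilter _ _) hcint.continuousAt
    have hFc : Continuous F := by
      simp only [hF_def]
      refine ((Real.continuous_exp.comp (continuous_const.mul continuous_id)).mul hEnc).sub ?_
      exact (Differentiable.continuous fun τ => (hprim τ).differentiableAt)
    have hFd : ∀ τ ∈ Ioo (0:ℝ) T, HasDerivAt F
        ((-3 * Real.exp (-3 * τ)) * En τ + Real.exp (-3 * τ) * Q τ
          - Real.exp (-3 * τ) * Gg τ) τ := by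
      intro τ hτ
      simp only [hF_def]
      exact ((hexp τ).mul (hEd τ hτ)).sub (hprim τ)
    have hanti : AntitoneOn F (Icc 0 T) := by
      refine antitoneOn_of_deriv_nonpos (convex_Icc 0 T) hFc.continuousOn ?_ ?_
      · intro τ hτ
        rw [interior_Icc] at hτ
        exact (hFd τ hτ).differentiableAt.differentiableWithinAt
      · intro τ hτ
        rw [interior_Icc] at hτ
        rw [(hFd τ hτ).deriv]
        have hq := hQle τ hτ
        have hep := Real.exp_pos (-3 * τ)
        nlinarith [mul_le_mul_of_nonneg_left hq hep.le]
    have hF0 : F 0 = En 0 := by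
      simp [hF_def, Real.exp_zero]
    have hFt : F t ≤ En 0 := by
      rw [← hF0]
      exact hanti ⟨le_rfl, hT.le⟩ ht ht.1
    have h1 : Real.exp (-3 * t) * En t ≤ En 0 + ∫ s in (0:ℝ)..t, Real.exp (-3 * s) * Gg s := by
      simp only [hF_def] at hFt
      linarith
    have h2 : ∫ s in (0:ℝ)..t, Real.exp (-3 * s) * Gg s ≤ ∫ s in (0:ℝ)..t, Gg s := by
      refine intervalIntegral.integral_mono_on ht.1 (hcint.intervalIntegrable _ _)
        (hGc.intervalIntegrable _ _) ?_
      intro τ hτ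
      have he1 : Real.exp (-3 * τ) ≤ 1 := by
        rw [← Real.exp_zero]
        exact Real.exp_le_exp.mpr (by nlinarith [hτ.1])
      nlinarith [hGnn τ, Real.exp_pos (-3 * τ)]
    have h3 : Real.exp (3 * t) * Real.exp (-3 * t) = 1 := by
      rw [← Real.exp_add]
      have : (3 * t) + (-3 * t) = 0 := by ring
      rw [this, Real.exp_zero]
    have h4 : 0 ≤ ∫ s in (0:ℝ)..t, Gg s :=
      intervalIntegral.integral_nonneg ht.1 fun τ _ => hGnn τ
    calc En t = Real.exp (3 * t) * (Real.exp (-3 * t) * En t) := by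
          rw [← mul_assoc, h3, one_mul]
      _ ≤ Real.exp (3 * t) * (En 0 + ∫ s in (0:ℝ)..t, Gg s) := by
          refine mul_le_mul_of_nonneg_left ?_ (Real.exp_pos _).le
          linarith
      _ ≤ Real.exp (3 * T) * (En 0 + ∫ s in (0:ℝ)..t, Gg s) := by
          refine mul_le_mul_of_nonneg_right (Real.exp_le_exp.mpr (by linarith [ht.2])) ?_
          linarith [hEnn 0]
  -- final conversion
  have hsplitE : ∀ τ : ℝ, En τ = (∫ x in (-L)..L, (et x τ) ^ 2)
      + ∫ x in (-L)..L, ((η x τ) ^ 2 + (ex x τ) ^ 2) := by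
    intro τ
    have h1 : En τ = ∫ x in (-L)..L, ((et x τ) ^ 2 + ((η x τ) ^ 2 + (ex x τ) ^ 2)) := by
      simp only [hEn_def, he_def]
      exact intervalIntegral.integral_congr fun x _ => by ring
    rw [h1, intervalIntegral.integral_add (f := fun x => et x τ ^ 2) (g := fun x => η x τ ^ 2 + ex x τ ^ 2) (((hXsl hcet τ).pow 2).intervalIntegrable _ _)
      ((((hXsl hcη τ).pow 2).add ((hXsl hcex τ).pow 2)).intervalIntegrable _ _)]
  have hLHS : (∫ x in (-L)..L, (pdt η x t) ^ 2)
      + (∫ x in (-L)..L, ((η x t) ^ 2 + (pdx η x t) ^ 2)) = En t := by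
    rw [hsplitE t]
    congr 1
    · exact intervalIntegral.integral_congr fun x _ => by rw [pdt_eq hη, het_def]
    · exact intervalIntegral.integral_congr fun x _ => by rw [pdx_eq hη, hex_def]
  have hE0 : En 0 = (∫ x in (-L)..L, (v₀ x) ^ 2)
      + ∫ x in (-L)..L, ((u₀ x) ^ 2 + (deriv u₀ x) ^ 2) := by
    rw [hsplitE 0]
    congr 1
    · refine intervalIntegral.integral_congr fun x hx => ?_
      rw [uIcc_of_le hLL] at hx
      have hv := (hini x hx).2
      rw [pdt_eq hη] at hv
      rw [het_def, hv]
    · have hae : ∀ᵐ x : ℝ ∂MeasureTheory.volume, x ≠ L := by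
        filter_upwards [MeasureTheory.compl_mem_ae_iff.mpr
          (MeasureTheory.measure_singleton L)] with x hx
        simpa using hx
      refine intervalIntegral.integral_congr_ae ?_
      filter_upwards [hae] with x hx hxI
      rw [uIoc_of_le hLL] at hxI
      have hxo : x ∈ Ioo (-L) L := ⟨hxI.1, lt_of_le_of_ne hxI.2 hx⟩
      have h1 : η x 0 = u₀ x := (hini x (Ioo_subset_Icc_self hxo)).1
      have h2 : deriv u₀ x = ex x 0 := by
        have hev : u₀ =ᶠ[nhds x] fun y => η y 0 := by
          filter_upwards [Ioo_mem_nhds hxo.1 hxo.2] with y hy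
          exact ((hini y (Ioo_subset_Icc_self hy)).1).symm
        rw [hev.deriv_eq, hex_def]
        exact (hasDerivAt_line_x hη x 0).deriv
      rw [h1, h2]
  rw [hLHS]
  have hGeq : (∫ s in (0:ℝ)..t, Gg s) = ∫ s in (0:ℝ)..t, ∫ x in (-L)..L, (g x s) ^ 2 := by
    simp only [hGg_def]
  calc En t ≤ Real.exp (3 * T) * (En 0 + ∫ s in (0:ℝ)..t, Gg s) := hEle
    _ = Real.exp (3 * T) * ((∫ x in (-L)..L, (v₀ x) ^ 2)
        + (∫ x in (-L)..L, ((u₀ x) ^ 2 + (deriv u₀ x) ^ 2))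
        + ∫ s in (0:ℝ)..t, ∫ x in (-L)..L, (g x s) ^ 2) := by
      rw [hE0, hGeq]
end

section
/- Let L > 0, T > 0, ε ∈ (0,1], let φ : [−L,L] × [0,T] → ℝ be continuous, and let g₁, g₂ : [−L,L] × [0,T] → ℝ be continuous. For i = 1, 2, let ηᵢ be a twice continuously differentiable solution on [−L,L] × [0,T] of (ηᵢ)_tt − (ηᵢ)_xx + ε⁻¹(sin(φ + ε ηᵢ) − sin φ) = gᵢ with boundary conditions (ηᵢ)_x(±L,t) = 0 (or ηᵢ(±L,t) = 0) and initial data ηᵢ(x,0) = u_{0,i}(x), (ηᵢ)_t(x,0) = v_{0,i}(x). Then there exists a constant c depending only on T such that for all t ∈ [0,T]: ∫_{−L}^{L} ((η₂)_t − (η₁)_t)²(x,t) dx + ∫_{−L}^{L} ((η₂ − η₁)² + ((η₂)_x − (η₁)_x)²)(x,t) dx ≤ c ( ∫_{−L}^{L} (v_{0,2} − v_{0,1})² dx + ∫_{−L}^{L} ((u_{0,2} − u_{0,1})² + (u_{0,2}' − u_{0,1}')²) dx + ∫_0^T ∫_{−L}^{L} (g₂ − g₁)²(x,s) dx ds ).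 -/
open Set Function MeasureTheory intervalIntegral

section layer
variable {f : ℝ → ℝ → ℝ} {x t : ℝ}

lemma hasDerivAt_pdt_aux (hf : DifferentiableAt ℝ (uncurry f) (x, t)) :
    HasDerivAt (fun s => f x s) (fderiv ℝ (uncurry f) (x, t) (0, 1)) t := by
  have h1 : HasDerivAt (fun s : ℝ => ((x : ℝ), s)) ((0 : ℝ), (1 : ℝ)) t :=
    (hasDerivAt_const t x).prodMk (hasDerivAt_id t)
  exact hf.hasFDerivAt.comp_hasDerivAt t h1

lemma hasDerivAt_pdx_aux (hf : DifferentiableAt ℝ (uncurry f) (x, t)) :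
    HasDerivAt (fun y => f y t) (fderiv ℝ (uncurry f) (x, t) (1, 0)) x := by
  have h1 : HasDerivAt (fun y : ℝ => (y, t)) ((1 : ℝ), (0 : ℝ)) x :=
    (hasDerivAt_id x).prodMk (hasDerivAt_const x t)
  exact hf.hasFDerivAt.comp_hasDerivAt x h1

lemma pdt_eq (hf : DifferentiableAt ℝ (uncurry f) (x, t)) :
    pdt f x t = fderiv ℝ (uncurry f) (x, t) (0, 1) := (hasDerivAt_pdt_aux hf).deriv

lemma pdx_eq (hf : DifferentiableAt ℝ (uncurry f) (x, t)) :
    pdx f x t = fderiv ℝ (uncurry f) (x, t) (1, 0) := (hasDerivAt_pdx_aux hf).deriv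

lemma hasDerivAt_pdt (hf : Differentiable ℝ (uncurry f)) :
    HasDerivAt (fun s => f x s) (pdt f x t) t := by
  rw [pdt_eq (hf _)]; exact hasDerivAt_pdt_aux (hf _)

lemma hasDerivAt_pdx (hf : Differentiable ℝ (uncurry f)) :
    HasDerivAt (fun y => f y t) (pdx f x t) x := by
  rw [pdx_eq (hf _)]; exact hasDerivAt_pdx_aux (hf _)

lemma uncurry_pdt_eq (hf : Differentiable ℝ (uncurry f)) :
    uncurry (pdt f) = fun p : ℝ × ℝ => fderiv ℝ (uncurry f) p ((0 : ℝ), (1 : ℝ)) := by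
  funext p
  obtain ⟨a, b⟩ := p
  exact pdt_eq (hf _)

lemma uncurry_pdx_eq (hf : Differentiable ℝ (uncurry f)) :
    uncurry (pdx f) = fun p : ℝ × ℝ => fderiv ℝ (uncurry f) p ((1 : ℝ), (0 : ℝ)) := by
  funext p
  obtain ⟨a, b⟩ := p
  exact pdx_eq (hf _)

lemma contDiff_uncurry_pdt (hf : ContDiff ℝ 2 (uncurry f)) :
    ContDiff ℝ 1 (uncurry (pdt f)) := by
  rw [uncurry_pdt_eq (hf.differentiable two_ne_zero)]
  exact (hf.fderiv_right (by norm_num)).clm_apply contDiff_const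

lemma contDiff_uncurry_pdx (hf : ContDiff ℝ 2 (uncurry f)) :
    ContDiff ℝ 1 (uncurry (pdx f)) := by
  rw [uncurry_pdx_eq (hf.differentiable two_ne_zero)]
  exact (hf.fderiv_right (by norm_num)).clm_apply contDiff_const

lemma continuous_uncurry_pdt (hf : ContDiff ℝ 1 (uncurry f)) :
    Continuous (uncurry (pdt f)) := by
  rw [uncurry_pdt_eq (hf.differentiable one_ne_zero)]
  exact ((hf.fderiv_right (m := 0) (by norm_num)).clm_apply contDiff_const).continuous

lemma continuous_uncurry_pdx (hf : ContDiff ℝ 1 (uncurry f)) :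
    Continuous (uncurry (pdx f)) := by
  rw [uncurry_pdx_eq (hf.differentiable one_ne_zero)]
  exact ((hf.fderiv_right (m := 0) (by norm_num)).clm_apply contDiff_const).continuous

lemma hasFDerivAt_fderiv_apply (hf : ContDiff ℝ 2 (uncurry f)) (v : ℝ × ℝ) (p : ℝ × ℝ) :
    HasFDerivAt (fun q : ℝ × ℝ => fderiv ℝ (uncurry f) q v)
      ((ContinuousLinearMap.apply ℝ ℝ v).comp (fderiv ℝ (fderiv ℝ (uncurry f)) p)) p := by
  have hD : HasFDerivAt (fderiv ℝ (uncurry f)) (fderiv ℝ (fderiv ℝ (uncurry f)) p) p :=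
    (((hf.fderiv_right (by norm_num : (1 : WithTop ℕ∞) + 1 ≤ 2)).differentiable one_ne_zero) p).hasFDerivAt
  exact ((ContinuousLinearMap.apply ℝ ℝ v).hasFDerivAt).comp p hD

lemma pdt_pdx_comm (hf : ContDiff ℝ 2 (uncurry f)) : pdt (pdx f) x t = pdx (pdt f) x t := by
  have hdiff := hf.differentiable two_ne_zero
  have h1 : pdt (pdx f) x t = fderiv ℝ (fderiv ℝ (uncurry f)) (x, t) (0, 1) (1, 0) := by
    have hdx : DifferentiableAt ℝ (uncurry (pdx f)) (x, t) :=
      (contDiff_uncurry_pdx hf).differentiable one_ne_zero _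
    rw [pdt_eq hdx, uncurry_pdx_eq hdiff,
      (hasFDerivAt_fderiv_apply hf ((1 : ℝ), (0 : ℝ)) (x, t)).fderiv]
    rfl
  have h2 : pdx (pdt f) x t = fderiv ℝ (fderiv ℝ (uncurry f)) (x, t) (1, 0) (0, 1) := by
    have hdt : DifferentiableAt ℝ (uncurry (pdt f)) (x, t) :=
      (contDiff_uncurry_pdt hf).differentiable one_ne_zero _
    rw [pdx_eq hdt, uncurry_pdt_eq hdiff,
      (hasFDerivAt_fderiv_apply hf ((0 : ℝ), (1 : ℝ)) (x, t)).fderiv]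
    rfl
  rw [h1, h2,
    second_derivative_symmetric (fun y => (hdiff y).hasFDerivAt)
      (((hf.fderiv_right (by norm_num : (1 : WithTop ℕ∞) + 1 ≤ 2)).differentiable one_ne_zero _).hasFDerivAt)
      _ _]

end layer

lemma cont_slice {f : ℝ → ℝ → ℝ} (hf : Continuous fun p : ℝ × ℝ => f p.1 p.2) (t : ℝ) :
    Continuous fun x => f x t := hf.comp (continuous_id.prodMk continuous_const)

lemma hasDerivAt_parametric (a b : ℝ) (f f' : ℝ → ℝ → ℝ)
    (hf : Continuous fun p : ℝ × ℝ => f p.1 p.2)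
    (hf' : Continuous fun p : ℝ × ℝ => f' p.1 p.2)
    (hd : ∀ x t, HasDerivAt (fun s => f x s) (f' x t) t) (t₀ : ℝ) :
    HasDerivAt (fun t => ∫ x in a..b, f x t) (∫ x in a..b, f' x t₀) t₀ := by
  obtain ⟨C, hC⟩ : ∃ C, ∀ p ∈ (uIcc a b) ×ˢ (Icc (t₀ - 1) (t₀ + 1)), ‖f' p.1 p.2‖ ≤ C :=
    (isCompact_uIcc.prod isCompact_Icc).exists_bound_of_continuousOn hf'.continuousOn
  have key := hasDerivAt_integral_of_dominated_loc_of_deriv_le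
    (F := fun t x => f x t) (F' := fun t x => f' x t) (x₀ := t₀)
    (a := a) (b := b) (μ := volume) (bound := fun _ => C) (Metric.ball_mem_nhds t₀ one_pos)
    ?meas ?int ?meas' ?bnd ?bint ?diff
  · exact key.2
  case meas =>
    exact Filter.Eventually.of_forall fun t => (cont_slice hf t).aestronglyMeasurable
  case int => exact (cont_slice hf t₀).intervalIntegrable a b
  case meas' => exact (cont_slice hf' t₀).aestronglyMeasurable
  case bnd =>
    refine Filter.Eventually.of_forall fun x hx t ht => ?_
    have hx' : x ∈ uIcc a b := uIoc_subset_uIcc hx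
    have ht' : t ∈ Icc (t₀ - 1) (t₀ + 1) := by
      rw [Metric.mem_ball, Real.dist_eq] at ht
      constructor <;> [linarith [abs_le.mp ht.le |>.1]; linarith [abs_le.mp ht.le |>.2]]
    exact hC (x, t) ⟨hx', ht'⟩
  case bint => exact intervalIntegrable_const
  case diff =>
    exact Filter.Eventually.of_forall fun x _ t _ => hd x t

lemma energy_estimate_s10 (L T : ℝ) (hL : 0 < L) (hT : 0 < T)
    (w gd S : ℝ → ℝ → ℝ)
    (hw : ContDiff ℝ 2 (uncurry w))
    (hgd : Continuous (uncurry gd))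
    (hSle : ∀ x ∈ Ioo (-L) L, ∀ t ∈ Ioo (0:ℝ) T, |S x t| ≤ |w x t|)
    (hpde : ∀ x ∈ Ioo (-L) L, ∀ t ∈ Ioo (0:ℝ) T,
      pdt (pdt w) x t - pdx (pdx w) x t + S x t = gd x t)
    (hbc : ∀ t ∈ Ioo (0:ℝ) T,
      pdx w (-L) t * pdt w (-L) t = 0 ∧ pdx w L t * pdt w L t = 0) :
    ∀ t ∈ Icc (0:ℝ) T,
      (∫ x in (-L)..L, ((pdt w x t)^2 + ((w x t)^2 + (pdx w x t)^2)))
        ≤ Real.exp (3*T) *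
          ((∫ x in (-L)..L, ((pdt w x 0)^2 + ((w x 0)^2 + (pdx w x 0)^2)))
            + ∫ s in (0:ℝ)..T, ∫ x in (-L)..L, (gd x s)^2) := by
  have hab : (-L : ℝ) ≤ L := by linarith
  have hw1 : Differentiable ℝ (uncurry w) := hw.differentiable two_ne_zero
  have hwt2 : ContDiff ℝ 1 (uncurry (pdt w)) := contDiff_uncurry_pdt hw
  have hwx2 : ContDiff ℝ 1 (uncurry (pdx w)) := contDiff_uncurry_pdx hw
  have hwt1 : Differentiable ℝ (uncurry (pdt w)) := hwt2.differentiable one_ne_zero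
  have hwx1 : Differentiable ℝ (uncurry (pdx w)) := hwx2.differentiable one_ne_zero
  -- joint continuity of everything
  have cw : Continuous fun p : ℝ × ℝ => w p.1 p.2 := hw.continuous
  have cwt : Continuous fun p : ℝ × ℝ => pdt w p.1 p.2 := hwt2.continuous
  have cwx : Continuous fun p : ℝ × ℝ => pdx w p.1 p.2 := hwx2.continuous
  have cwtt : Continuous fun p : ℝ × ℝ => pdt (pdt w) p.1 p.2 := continuous_uncurry_pdt hwt2
  have cwtx : Continuous fun p : ℝ × ℝ => pdt (pdx w) p.1 p.2 := continuous_uncurry_pdt hwx2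
  have cwxt : Continuous fun p : ℝ × ℝ => pdx (pdt w) p.1 p.2 := continuous_uncurry_pdx hwt2
  have cwxx : Continuous fun p : ℝ × ℝ => pdx (pdx w) p.1 p.2 := continuous_uncurry_pdx hwx2
  have cgd : Continuous fun p : ℝ × ℝ => gd p.1 p.2 := hgd
  set E : ℝ → ℝ :=
    fun t => ∫ x in (-L)..L, ((pdt w x t)^2 + ((w x t)^2 + (pdx w x t)^2)) with hEdef
  set G : ℝ → ℝ := fun t => ∫ x in (-L)..L, (gd x t)^2 with hGdef
  set D : ℝ → ℝ := fun t => ∫ x in (-L)..L,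
    (2 * pdt w x t * pdt (pdt w) x t
      + (2 * w x t * pdt w x t + 2 * pdx w x t * pdt (pdx w) x t)) with hDdef
  -- Step 1 : E' = D
  have hE' : ∀ t, HasDerivAt E (D t) t := by
    intro t
    have hc1 : Continuous fun p : ℝ × ℝ =>
        (pdt w p.1 p.2)^2 + ((w p.1 p.2)^2 + (pdx w p.1 p.2)^2) :=
      (cwt.pow 2).add ((cw.pow 2).add (cwx.pow 2))
    have hc2 : Continuous fun p : ℝ × ℝ =>
        2 * pdt w p.1 p.2 * pdt (pdt w) p.1 p.2
          + (2 * w p.1 p.2 * pdt w p.1 p.2 + 2 * pdx w p.1 p.2 * pdt (pdx w) p.1 p.2) :=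
      ((continuous_const.mul cwt).mul cwtt).add
        (((continuous_const.mul cw).mul cwt).add ((continuous_const.mul cwx).mul cwtx))
    have hd : ∀ x s, HasDerivAt
        (fun s => (pdt w x s)^2 + ((w x s)^2 + (pdx w x s)^2))
        (2 * pdt w x s * pdt (pdt w) x s
          + (2 * w x s * pdt w x s + 2 * pdx w x s * pdt (pdx w) x s)) s := by
      intro x s
      have h1 : HasDerivAt (fun s => w x s) (pdt w x s) s := hasDerivAt_pdt hw1
      have h2 : HasDerivAt (fun s => pdt w x s) (pdt (pdt w) x s) s := hasDerivAt_pdt hwt1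
      have h3 : HasDerivAt (fun s => pdx w x s) (pdt (pdx w) x s) s := hasDerivAt_pdt hwx1
      have := ((h2.pow 2).add ((h1.pow 2).add (h3.pow 2)))
      refine this.congr_deriv ?_
      push_cast
      ring
    exact hasDerivAt_parametric (-L) L _ _ hc1 hc2 hd t
  have hEcont : Continuous E := by
    rw [continuous_iff_continuousAt]; exact fun t => (hE' t).continuousAt
  -- G continuous, nonneg
  have hGcont : Continuous G := by
    apply intervalIntegral.continuous_parametric_intervalIntegral_of_continuous'
      (f := fun t x => (gd x t)^2) (μ := volume)
    exact ((hgd.comp (continuous_snd.prodMk continuous_fst)).pow 2)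
  have hGnn : ∀ s, 0 ≤ G s :=
    fun s => intervalIntegral.integral_nonneg hab fun x _ => sq_nonneg _
  have hEnn : ∀ s, 0 ≤ E s := fun s => intervalIntegral.integral_nonneg hab fun x _ => by positivity
  -- Step 2 + 3 : D t ≤ 3 E t + G t  on (0,T)
  have hstep3 : ∀ t ∈ Ioo (0:ℝ) T, D t ≤ 3 * E t + G t := by
    intro t ht
    have int_wxxwt : IntervalIntegrable
        (fun x => pdx (pdx w) x t * pdt w x t + pdx w x t * pdx (pdt w) x t) volume (-L) L :=
      (((cont_slice cwxx t).mul (cont_slice cwt t)).add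
        ((cont_slice cwx t).mul (cont_slice cwxt t))).intervalIntegrable _ _
    have hibp : (∫ x in (-L)..L,
        (pdx (pdx w) x t * pdt w x t + pdx w x t * pdx (pdt w) x t)) = 0 := by
      rw [integral_deriv_mul_eq_sub
        (u := fun x => pdx w x t) (v := fun x => pdt w x t)
        (u' := fun x => pdx (pdx w) x t) (v' := fun x => pdx (pdt w) x t)
        (fun x _ => hasDerivAt_pdx hwx1) (fun x _ => hasDerivAt_pdx hwt1)
        ((cont_slice cwxx t).intervalIntegrable _ _)
        ((cont_slice cwxt t).intervalIntegrable _ _)]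
      rw [(hbc t ht).1, (hbc t ht).2, sub_zero]
    have intT : IntervalIntegrable
        (fun x => 2 * pdt w x t * (pdt (pdt w) x t - pdx (pdx w) x t) + 2 * w x t * pdt w x t)
        volume (-L) L :=
      (((continuous_const.mul (cont_slice cwt t)).mul
        ((cont_slice cwtt t).sub (cont_slice cwxx t))).add
        ((continuous_const.mul (cont_slice cw t)).mul (cont_slice cwt t))).intervalIntegrable _ _
    have hsplit : D t = ∫ x in (-L)..L,
        (2 * pdt w x t * (pdt (pdt w) x t - pdx (pdx w) x t) + 2 * w x t * pdt w x t) := by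
      show (∫ x in (-L)..L,
        (2 * pdt w x t * pdt (pdt w) x t
          + (2 * w x t * pdt w x t + 2 * pdx w x t * pdt (pdx w) x t))) = _
      have : (∫ x in (-L)..L,
          (2 * pdt w x t * pdt (pdt w) x t
            + (2 * w x t * pdt w x t + 2 * pdx w x t * pdt (pdx w) x t)))
          = (∫ x in (-L)..L,
            ((2 * pdt w x t * (pdt (pdt w) x t - pdx (pdx w) x t) + 2 * w x t * pdt w x t)
              + 2 * (pdx (pdx w) x t * pdt w x t + pdx w x t * pdx (pdt w) x t))) := by
        apply intervalIntegral.integral_congr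
        intro x _
        simp only
        rw [pdt_pdx_comm hw]
        ring
      rw [this, intervalIntegral.integral_add intT (int_wxxwt.const_mul 2),
        intervalIntegral.integral_const_mul, hibp]
      ring
    have hmono : (∫ x in (-L)..L,
        (2 * pdt w x t * (pdt (pdt w) x t - pdx (pdx w) x t) + 2 * w x t * pdt w x t))
        ≤ ∫ x in (-L)..L,
          (3 * ((pdt w x t)^2 + ((w x t)^2 + (pdx w x t)^2)) + (gd x t)^2) := by
      have int1 : IntegrableOn (fun x =>
          2 * pdt w x t * (pdt (pdt w) x t - pdx (pdx w) x t) + 2 * w x t * pdt w x t)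
          (Ioo (-L) L) volume :=
        ((((continuous_const.mul (cont_slice cwt t)).mul
          ((cont_slice cwtt t).sub (cont_slice cwxx t))).add
          ((continuous_const.mul (cont_slice cw t)).mul
            (cont_slice cwt t))).integrableOn_Icc).mono_set Ioo_subset_Icc_self
      have int2 : IntegrableOn (fun x =>
          3 * ((pdt w x t)^2 + ((w x t)^2 + (pdx w x t)^2)) + (gd x t)^2)
          (Ioo (-L) L) volume :=
        ((((continuous_const.mul (((cont_slice cwt t).pow 2).add
          (((cont_slice cw t).pow 2).add ((cont_slice cwx t).pow 2)))).add
          ((cont_slice cgd t).pow 2)).integrableOn_Icc).mono_set Ioo_subset_Icc_self)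
      rw [intervalIntegral.integral_of_le hab, intervalIntegral.integral_of_le hab,
        MeasureTheory.integral_Ioc_eq_integral_Ioo, MeasureTheory.integral_Ioc_eq_integral_Ioo]
      apply MeasureTheory.setIntegral_mono_on int1 int2
      · exact measurableSet_Ioo
      · intro x hx
        have hpde' : pdt (pdt w) x t - pdx (pdx w) x t = gd x t - S x t := by
          have := hpde x hx t ht; linarith
        have hS2 : (S x t)^2 ≤ (w x t)^2 := by
          have h := hSle x hx t ht
          calc (S x t)^2 = |S x t|^2 := (sq_abs _).symm
            _ ≤ |w x t|^2 := by gcongr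
            _ = (w x t)^2 := sq_abs _
        rw [hpde']
        nlinarith [sq_nonneg (pdt w x t - gd x t), sq_nonneg (pdt w x t + S x t),
          sq_nonneg (w x t - pdt w x t), sq_nonneg (pdx w x t)]
    have hfin : (∫ x in (-L)..L,
        (3 * ((pdt w x t)^2 + ((w x t)^2 + (pdx w x t)^2)) + (gd x t)^2))
        = 3 * E t + G t := by
      rw [intervalIntegral.integral_add
        (f := fun x => 3 * ((pdt w x t)^2 + ((w x t)^2 + (pdx w x t)^2)))
        (g := fun x => (gd x t)^2)
        ((((cont_slice cwt t).pow 2).add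
          (((cont_slice cw t).pow 2).add ((cont_slice cwx t).pow 2))).intervalIntegrable _ _
            |>.const_mul 3)
        (((cont_slice cgd t).pow 2).intervalIntegrable _ _),
        intervalIntegral.integral_const_mul]
    rw [hsplit]
    calc _ ≤ _ := hmono
      _ = 3 * E t + G t := hfin
  -- Step 4: H and its derivative
  set H : ℝ → ℝ := fun t => E t + ∫ s in t..T, G s with hHdef
  have hH' : ∀ t, HasDerivAt H (D t - G t) t := by
    intro t
    have h2 : HasDerivAt (fun u => ∫ s in u..T, G s) (-G t) t :=
      intervalIntegral.integral_hasDerivAt_left ((hGcont.intervalIntegrable) t T)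
        (hGcont.stronglyMeasurable.stronglyMeasurableAtFilter) hGcont.continuousAt
    have := (hE' t).add h2; rw [sub_eq_add_neg]; exact this
  have hHcont : Continuous H := by
    rw [continuous_iff_continuousAt]; exact fun t => (hH' t).continuousAt
  set K : ℝ → ℝ := fun t => Real.exp (-3 * t) * H t with hKdef
  have hK' : ∀ t, HasDerivAt K
      (Real.exp (-3 * t) * (-3) * H t + Real.exp (-3 * t) * (D t - G t)) t := by
    intro t
    have hin : HasDerivAt (fun t : ℝ => -3 * t) (-3) t := by
      simpa using (hasDerivAt_id t).const_mul (-3)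
    have hexp : HasDerivAt (fun t : ℝ => Real.exp (-3 * t)) (Real.exp (-3 * t) * (-3)) t :=
      (Real.hasDerivAt_exp _).comp t hin
    exact hexp.mul (hH' t)
  have hKanti : AntitoneOn K (Icc 0 T) := by
    apply antitoneOn_of_deriv_nonpos (convex_Icc 0 T)
    · exact ((Real.continuous_exp.comp (continuous_const.mul continuous_id)).mul
        hHcont).continuousOn
    · intro t _
      exact (hK' t).differentiableAt.differentiableWithinAt
    · intro t ht
      rw [interior_Icc] at ht
      rw [(hK' t).deriv]
      have hEH : E t ≤ H t := by
        have : 0 ≤ ∫ s in t..T, G s :=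
          intervalIntegral.integral_nonneg ht.2.le fun s _ => hGnn s
        rw [hHdef]; simp only; linarith
      have h1 : -3 * H t + (D t - G t) ≤ 0 := by
        have := hstep3 t ht
        linarith
      calc Real.exp (-3 * t) * (-3) * H t + Real.exp (-3 * t) * (D t - G t)
          = Real.exp (-3 * t) * (-3 * H t + (D t - G t)) := by ring
        _ ≤ 0 := mul_nonpos_of_nonneg_of_nonpos (Real.exp_pos _).le h1
  -- Step 6: conclude
  intro t ht
  have hEH : E t ≤ H t := by
    have : 0 ≤ ∫ s in t..T, G s :=
      intervalIntegral.integral_nonneg ht.2 fun s _ => hGnn s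
    rw [hHdef]; simp only; linarith
  have hKle : K t ≤ K 0 := hKanti (left_mem_Icc.mpr (by linarith [ht.2, ht.1])) ht ht.1
  have hK0 : K 0 = H 0 := by rw [hKdef]; simp
  have hH0nn : 0 ≤ H 0 := by
    rw [hHdef]; simp only
    have h9 : (0:ℝ) ≤ ∫ s in (0:ℝ)..T, G s :=
      intervalIntegral.integral_nonneg hT.le fun s _ => hGnn s
    linarith [hEnn 0]
  have hHt : H t ≤ Real.exp (3 * t) * H 0 := by
    have := mul_le_mul_of_nonneg_left hKle (Real.exp_pos (3 * t)).le
    rw [hK0] at this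
    calc H t = Real.exp (3 * t) * (Real.exp (-3 * t) * H t) := by
          rw [← mul_assoc, ← Real.exp_add]; ring_nf; simp
      _ = Real.exp (3 * t) * K t := by rw [hKdef]
      _ ≤ Real.exp (3 * t) * H 0 := this
  have hexp_le : Real.exp (3 * t) ≤ Real.exp (3 * T) :=
    Real.exp_le_exp.mpr (by nlinarith [ht.2])
  have hHT : H t ≤ Real.exp (3 * T) * H 0 := hHt.trans (by nlinarith)
  have hH0 : H 0 = E 0 + ∫ s in (0:ℝ)..T, G s := rfl
  calc E t ≤ H t := hEH
    _ ≤ Real.exp (3 * T) * H 0 := hHT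
    _ = Real.exp (3 * T) * (E 0 + ∫ s in (0:ℝ)..T, G s) := by rw [hH0]

lemma sin_lip (a b : ℝ) : |Real.sin a - Real.sin b| ≤ |a - b| := by
  have h := Convex.norm_image_sub_le_of_norm_hasDerivWithin_le (f := Real.sin) (f' := Real.cos)
    (s := Set.univ) (fun x _ => (Real.hasDerivAt_sin x).hasDerivWithinAt)
    (fun x _ => by simpa using Real.abs_cos_le_one x) convex_univ
    (Set.mem_univ b) (Set.mem_univ a)
  simpa [Real.norm_eq_abs] using h

/-- Continuous dependence on data for the perturbation equation: for `T > 0` there is a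
constant `c > 0` depending only on `T` such that for two `C²` solutions `η₁, η₂` of the
perturbation equation with forces `g₁, g₂`, boundary conditions of Neumann (or
Dirichlet) type, and initial data `(u₀ᵢ, v₀ᵢ)`, for all `t ∈ [0,T]` the difference
satisfies the stated `H¹ × L²` estimate in terms of the differences of the data. -/
theorem continuous_dependence (T : ℝ) (hT : 0 < T) :
    ∃ c > 0, ∀ (L ε : ℝ) (φ g₁ g₂ η₁ η₂ : ℝ → ℝ → ℝ)
      (u₀₁ u₀₂ v₀₁ v₀₂ : ℝ → ℝ),
      0 < L → 0 < ε → ε ≤ 1 →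
      Continuous (Function.uncurry φ) →
      Continuous (Function.uncurry g₁) → Continuous (Function.uncurry g₂) →
      ContDiff ℝ 2 (Function.uncurry η₁) → ContDiff ℝ 2 (Function.uncurry η₂) →
      (∀ x ∈ Ioo (-L) L, ∀ t ∈ Ioo (0 : ℝ) T,
        pdt (pdt η₁) x t - pdx (pdx η₁) x t
          + ε⁻¹ * (Real.sin (φ x t + ε * η₁ x t) - Real.sin (φ x t)) = g₁ x t) →
      (∀ x ∈ Ioo (-L) L, ∀ t ∈ Ioo (0 : ℝ) T,
        pdt (pdt η₂) x t - pdx (pdx η₂) x t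
          + ε⁻¹ * (Real.sin (φ x t + ε * η₂ x t) - Real.sin (φ x t)) = g₂ x t) →
      ((∀ t ∈ Icc (0 : ℝ) T, (pdx η₁ (-L) t = 0 ∧ pdx η₁ L t = 0) ∧
                             (pdx η₂ (-L) t = 0 ∧ pdx η₂ L t = 0)) ∨
       (∀ t ∈ Icc (0 : ℝ) T, (η₁ (-L) t = 0 ∧ η₁ L t = 0) ∧
                             (η₂ (-L) t = 0 ∧ η₂ L t = 0))) →
      (∀ x ∈ Icc (-L) L, η₁ x 0 = u₀₁ x ∧ pdt η₁ x 0 = v₀₁ x) →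
      (∀ x ∈ Icc (-L) L, η₂ x 0 = u₀₂ x ∧ pdt η₂ x 0 = v₀₂ x) →
      ∀ t ∈ Icc (0 : ℝ) T,
        (∫ x in (-L)..L, (pdt η₂ x t - pdt η₁ x t) ^ 2)
            + (∫ x in (-L)..L,
                ((η₂ x t - η₁ x t) ^ 2 + (pdx η₂ x t - pdx η₁ x t) ^ 2)) ≤
          c * ((∫ x in (-L)..L, (v₀₂ x - v₀₁ x) ^ 2)
              + (∫ x in (-L)..L,
                  ((u₀₂ x - u₀₁ x) ^ 2 + (deriv u₀₂ x - deriv u₀₁ x) ^ 2))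
              + ∫ s in (0 : ℝ)..T, ∫ x in (-L)..L, (g₂ x s - g₁ x s) ^ 2) := by
  refine ⟨Real.exp (3 * T), Real.exp_pos _, ?_⟩
  intro L ε φ g₁ g₂ η₁ η₂ u₀₁ u₀₂ v₀₁ v₀₂ hL hε hε1 hφ hg₁ hg₂ hη₁ hη₂ heq₁ heq₂ hbcase hi₁ hi₂
    t htt
  have hab : (-L : ℝ) ≤ L := by linarith
  set w : ℝ → ℝ → ℝ := fun x t => η₂ x t - η₁ x t with hwdef
  set gd : ℝ → ℝ → ℝ := fun x t => g₂ x t - g₁ x t with hgddef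
  set S : ℝ → ℝ → ℝ := fun x t =>
    ε⁻¹ * (Real.sin (φ x t + ε * η₂ x t) - Real.sin (φ x t + ε * η₁ x t)) with hSdef
  have hw : ContDiff ℝ 2 (uncurry w) := by rw [hwdef]; exact hη₂.sub hη₁
  have hgd : Continuous (uncurry gd) := by rw [hgddef]; exact hg₂.sub hg₁
  have hd1 : Differentiable ℝ (uncurry η₁) := hη₁.differentiable two_ne_zero
  have hd2 : Differentiable ℝ (uncurry η₂) := hη₂.differentiable two_ne_zero
  have hdt1 : Differentiable ℝ (uncurry (pdt η₁)) := (contDiff_uncurry_pdt hη₁).differentiable one_ne_zero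
  have hdt2 : Differentiable ℝ (uncurry (pdt η₂)) := (contDiff_uncurry_pdt hη₂).differentiable one_ne_zero
  have hdx1 : Differentiable ℝ (uncurry (pdx η₁)) := (contDiff_uncurry_pdx hη₁).differentiable one_ne_zero
  have hdx2 : Differentiable ℝ (uncurry (pdx η₂)) := (contDiff_uncurry_pdx hη₂).differentiable one_ne_zero
  have hpdtw : ∀ x s : ℝ, pdt w x s = pdt η₂ x s - pdt η₁ x s := by
    intro x s
    rw [hwdef]
    exact ((hasDerivAt_pdt hd2).sub (hasDerivAt_pdt hd1)).deriv
  have hpdxw : ∀ x s : ℝ, pdx w x s = pdx η₂ x s - pdx η₁ x s := by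
    intro x s
    rw [hwdef]
    exact ((hasDerivAt_pdx hd2).sub (hasDerivAt_pdx hd1)).deriv
  have hptt : ∀ x s : ℝ, pdt (pdt w) x s = pdt (pdt η₂) x s - pdt (pdt η₁) x s := by
    intro x s
    have h : (fun u => pdt w x u) = fun u => pdt η₂ x u - pdt η₁ x u :=
      funext fun u => hpdtw x u
    show deriv (fun u => pdt w x u) s = _
    rw [h]
    exact ((hasDerivAt_pdt hdt2).sub (hasDerivAt_pdt hdt1)).deriv
  have hpxx : ∀ x s : ℝ, pdx (pdx w) x s = pdx (pdx η₂) x s - pdx (pdx η₁) x s := by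
    intro x s
    have h : (fun y => pdx w y s) = fun y => pdx η₂ y s - pdx η₁ y s :=
      funext fun y => hpdxw y s
    show deriv (fun y => pdx w y s) x = _
    rw [h]
    exact ((hasDerivAt_pdx hdx2).sub (hasDerivAt_pdx hdx1)).deriv
  have hpde : ∀ x ∈ Ioo (-L) L, ∀ s ∈ Ioo (0:ℝ) T,
      pdt (pdt w) x s - pdx (pdx w) x s + S x s = gd x s := by
    intro x hx s hs
    have h1 := heq₁ x hx s hs
    have h2 := heq₂ x hx s hs
    simp only [hptt, hpxx, hSdef, hgddef]
    have hεne : ε ≠ 0 := ne_of_gt hε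
    field_simp at h1 h2 ⊢
    nlinarith [h1, h2]
  have hSle : ∀ x ∈ Ioo (-L) L, ∀ s ∈ Ioo (0:ℝ) T, |S x s| ≤ |w x s| := by
    intro x _ s _
    have hsin : |Real.sin (φ x s + ε * η₂ x s) - Real.sin (φ x s + ε * η₁ x s)|
        ≤ |(φ x s + ε * η₂ x s) - (φ x s + ε * η₁ x s)| :=
      sin_lip _ _
    have harg : |(φ x s + ε * η₂ x s) - (φ x s + ε * η₁ x s)| = ε * |w x s| := by
      rw [hwdef]
      have : (φ x s + ε * η₂ x s) - (φ x s + ε * η₁ x s) = ε * (η₂ x s - η₁ x s) := by ring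
      rw [this, abs_mul, abs_of_pos hε]
    calc |S x s| = ε⁻¹ * |Real.sin (φ x s + ε * η₂ x s) - Real.sin (φ x s + ε * η₁ x s)| := by
          rw [hSdef]; simp only
          rw [abs_mul, abs_of_pos (inv_pos.mpr hε)]
      _ ≤ ε⁻¹ * (ε * |w x s|) := by
          apply mul_le_mul_of_nonneg_left _ (inv_pos.mpr hε).le
          rw [← harg]; exact hsin
      _ = |w x s| := by field_simp
  have hbc : ∀ s ∈ Ioo (0:ℝ) T,
      pdx w (-L) s * pdt w (-L) s = 0 ∧ pdx w L s * pdt w L s = 0 := by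
    intro s hs
    rcases hbcase with h | h
    · have h' := h s (Ioo_subset_Icc_self hs)
      constructor
      · rw [hpdxw, h'.1.1, h'.2.1]; ring
      · rw [hpdxw, h'.1.2, h'.2.2]; ring
    · have hzero : ∀ z : ℝ, (∀ u ∈ Icc (0:ℝ) T, w z u = 0) → pdt w z s = 0 := by
        intro z hz
        have hev : (fun u => w z u) =ᶠ[nhds s] fun _ => (0:ℝ) :=
          Filter.eventuallyEq_of_mem (Ioo_mem_nhds hs.1 hs.2)
            (fun u hu => hz u (Ioo_subset_Icc_self hu))
        show deriv (fun u => w z u) s = 0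
        rw [hev.deriv_eq]
        exact deriv_const s 0
      have hzL : ∀ u ∈ Icc (0:ℝ) T, w (-L) u = 0 := by
        intro u hu
        have := h u hu
        rw [hwdef]
        simp only
        rw [this.1.1, this.2.1]; ring
      have hzR : ∀ u ∈ Icc (0:ℝ) T, w L u = 0 := by
        intro u hu
        have := h u hu
        rw [hwdef]
        simp only
        rw [this.1.2, this.2.2]; ring
      exact ⟨by rw [hzero _ hzL]; ring, by rw [hzero _ hzR]; ring⟩
  have key := energy_estimate_s10 L T hL hT w gd S hw hgd hSle hpde hbc t htt
  -- continuity pieces for splitting integrals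
  have cw : Continuous fun p : ℝ × ℝ => w p.1 p.2 := hw.continuous
  have cwt : Continuous fun p : ℝ × ℝ => pdt w p.1 p.2 := (contDiff_uncurry_pdt hw).continuous
  have cwx : Continuous fun p : ℝ × ℝ => pdx w p.1 p.2 := (contDiff_uncurry_pdx hw).continuous
  have intA : ∀ s : ℝ, IntervalIntegrable (fun x => (pdt w x s)^2) volume (-L) L :=
    fun s => ((cont_slice cwt s).pow 2).intervalIntegrable _ _
  have intB : ∀ s : ℝ, IntervalIntegrable (fun x => (w x s)^2 + (pdx w x s)^2) volume (-L) L :=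
    fun s => (((cont_slice cw s).pow 2).add ((cont_slice cwx s).pow 2)).intervalIntegrable _ _
  have hsplit : ∀ s : ℝ, (∫ x in (-L)..L, ((pdt w x s)^2 + ((w x s)^2 + (pdx w x s)^2)))
      = (∫ x in (-L)..L, (pdt w x s)^2) + ∫ x in (-L)..L, ((w x s)^2 + (pdx w x s)^2) :=
    fun s => intervalIntegral.integral_add (intA s) (intB s)
  -- identify LHS
  have e1 : (∫ x in (-L)..L, (pdt η₂ x t - pdt η₁ x t) ^ 2)
      = ∫ x in (-L)..L, (pdt w x t)^2 := by
    apply intervalIntegral.integral_congr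
    intro x _
    simp only [hpdtw]
  have e2 : (∫ x in (-L)..L, ((η₂ x t - η₁ x t) ^ 2 + (pdx η₂ x t - pdx η₁ x t) ^ 2))
      = ∫ x in (-L)..L, ((w x t)^2 + (pdx w x t)^2) := by
    apply intervalIntegral.integral_congr
    intro x _
    show _ = (η₂ x t - η₁ x t)^2 + (pdx w x t)^2; rw [hpdxw]
  -- identify data terms
  have hA : (∫ x in (-L)..L, (pdt w x 0)^2) = ∫ x in (-L)..L, (v₀₂ x - v₀₁ x) ^ 2 := by
    apply intervalIntegral.integral_congr
    intro x hx
    rw [uIcc_of_le hab] at hx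
    simp only [hpdtw, (hi₁ x hx).2, (hi₂ x hx).2]
  have hB : (∫ x in (-L)..L, ((w x 0)^2 + (pdx w x 0)^2))
      = ∫ x in (-L)..L, ((u₀₂ x - u₀₁ x) ^ 2 + (deriv u₀₂ x - deriv u₀₁ x) ^ 2) := by
    rw [intervalIntegral.integral_of_le hab, intervalIntegral.integral_of_le hab,
      MeasureTheory.integral_Ioc_eq_integral_Ioo, MeasureTheory.integral_Ioc_eq_integral_Ioo]
    apply MeasureTheory.setIntegral_congr_fun measurableSet_Ioo
    intro x hx
    have hx' : x ∈ Icc (-L) L := Ioo_subset_Icc_self hx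
    have hwx0 : w x 0 = u₀₂ x - u₀₁ x := by
      rw [hwdef]; simp only; rw [(hi₁ x hx').1, (hi₂ x hx').1]
    have hd2' : pdx η₂ x 0 = deriv u₀₂ x := by
      have hev : (fun y => η₂ y 0) =ᶠ[nhds x] u₀₂ :=
        Filter.eventuallyEq_of_mem (Ioo_mem_nhds hx.1 hx.2)
          (fun y hy => (hi₂ y (Ioo_subset_Icc_self hy)).1)
      exact hev.deriv_eq
    have hd1' : pdx η₁ x 0 = deriv u₀₁ x := by
      have hev : (fun y => η₁ y 0) =ᶠ[nhds x] u₀₁ :=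
        Filter.eventuallyEq_of_mem (Ioo_mem_nhds hx.1 hx.2)
          (fun y hy => (hi₁ y (Ioo_subset_Icc_self hy)).1)
      exact hev.deriv_eq
    simp only [hwx0, hpdxw, hd1', hd2']
  -- identify force term
  have hC : (∫ s in (0:ℝ)..T, ∫ x in (-L)..L, (gd x s)^2)
      = ∫ s in (0:ℝ)..T, ∫ x in (-L)..L, (g₂ x s - g₁ x s) ^ 2 := by
    simp only [hgddef]
  calc (∫ x in (-L)..L, (pdt η₂ x t - pdt η₁ x t) ^ 2)
        + (∫ x in (-L)..L, ((η₂ x t - η₁ x t) ^ 2 + (pdx η₂ x t - pdx η₁ x t) ^ 2))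
      = ∫ x in (-L)..L, ((pdt w x t)^2 + ((w x t)^2 + (pdx w x t)^2)) := by
        rw [e1, e2, hsplit t]
    _ ≤ Real.exp (3*T) * ((∫ x in (-L)..L, ((pdt w x 0)^2 + ((w x 0)^2 + (pdx w x 0)^2)))
          + ∫ s in (0:ℝ)..T, ∫ x in (-L)..L, (gd x s)^2) := key
    _ = Real.exp (3 * T) * ((∫ x in (-L)..L, (v₀₂ x - v₀₁ x) ^ 2)
          + (∫ x in (-L)..L, ((u₀₂ x - u₀₁ x) ^ 2 + (deriv u₀₂ x - deriv u₀₁ x) ^ 2))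
          + ∫ s in (0 : ℝ)..T, ∫ x in (-L)..L, (g₂ x s - g₁ x s) ^ 2) := by
        rw [hsplit 0, hA, hB, hC]
end
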